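/- For τ in the upper half plane, the function z ↦ φ(τ, z)/(e^{2πiz} − 1) tends to ∏_{n=1}^∞ (1 − qⁿ)² as z → 0 (z ≠ 0). In particular φ(τ, ·) has a simple zero at z = 0. -/

import Mathlib

open Complex Filter Metric

noncomputable def logSum (q w : ℂ) : ℂ := ∑' n : ℕ, Complex.log (1 - q ^ (n + 1) * w)

lemma aux_norm_le {q w : ℂ} {M : ℝ} (hw : ‖w‖ ≤ M) (n : ℕ) :
    ‖q ^ (n + 1) * w‖ ≤ ‖q‖ ^ n * (‖q‖ * M) := by
  calc ‖q ^ (n + 1) * w‖ = ‖q‖ ^ (n + 1) * ‖w‖ := by rw [norm_mul, norm_pow]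
    _ ≤ ‖q‖ ^ (n + 1) * M := by gcongr
    _ = ‖q‖ ^ n * (‖q‖ * M) := by ring

lemma aux_norm_lt_one {q w : ℂ} {M : ℝ} (hM : 1 ≤ M) (hqM : ‖q‖ * M < 1)
    (hw : ‖w‖ ≤ M) (n : ℕ) : ‖q ^ (n + 1) * w‖ < 1 := by
  have hq1 : ‖q‖ ≤ 1 := by nlinarith [norm_nonneg q]
  have h2 : ‖q‖ ^ n ≤ 1 := pow_le_one₀ (norm_nonneg q) hq1
  have := aux_norm_le (q:=q) hw n
  nlinarith [norm_nonneg (q ^ (n + 1) * w), mul_nonneg (norm_nonneg q) (le_trans zero_le_one hM)]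

lemma aux_ne_zero {q w : ℂ} {M : ℝ} (hM : 1 ≤ M) (hqM : ‖q‖ * M < 1)
    (hw : ‖w‖ ≤ M) (n : ℕ) : 1 - q ^ (n + 1) * w ≠ 0 := by
  intro h
  have h1 : q ^ (n + 1) * w = 1 := by linear_combination -h
  have := aux_norm_lt_one hM hqM hw n
  rw [h1] at this; simp at this

lemma aux_slitPlane {q w : ℂ} {M : ℝ} (hM : 1 ≤ M) (hqM : ‖q‖ * M < 1)
    (hw : ‖w‖ ≤ M) (n : ℕ) : 1 - q ^ (n + 1) * w ∈ Complex.slitPlane := by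
  rw [Complex.mem_slitPlane_iff]
  left
  have h1 : |(q ^ (n + 1) * w).re| ≤ ‖q ^ (n + 1) * w‖ := Complex.abs_re_le_norm _
  have h2 := aux_norm_lt_one hM hqM hw n
  have : (1 - q ^ (n + 1) * w).re = 1 - (q ^ (n + 1) * w).re := by simp
  rw [this]
  cases abs_le.mp h1 with
  | intro a b => linarith

lemma aux_norm_log_le {q w : ℂ} {M : ℝ} (hM : 1 ≤ M) (hqM : ‖q‖ * M < 1)
    (hw : ‖w‖ ≤ M) (n : ℕ) :
    ‖Complex.log (1 - q ^ (n + 1) * w)‖ ≤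
      ((‖q‖ * M) * (1 - ‖q‖ * M)⁻¹ / 2 + 1) * (‖q‖ * M) * ‖q‖ ^ n := by
  set c : ℝ := ‖q‖ * M with hc
  have hc0 : 0 ≤ c := mul_nonneg (norm_nonneg q) (le_trans zero_le_one hM)
  have hq1 : ‖q‖ ≤ 1 := by nlinarith [norm_nonneg q]
  have hqn : ‖q‖ ^ n ≤ 1 := pow_le_one₀ (norm_nonneg q) hq1
  have hqn0 : 0 ≤ ‖q‖ ^ n := pow_nonneg (norm_nonneg q) n
  set y : ℝ := ‖-(q ^ (n + 1) * w)‖ with hy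
  have hy0 : 0 ≤ y := norm_nonneg _
  have hyb : y ≤ ‖q‖ ^ n * c := by rw [hy, norm_neg]; exact aux_norm_le hw n
  have hyc : y ≤ c := le_trans hyb (by nlinarith)
  have hylt : y < 1 := lt_of_le_of_lt hyc hqM
  have hlog := Complex.norm_log_one_add_le hylt
  have h1 : (1 : ℂ) + -(q ^ (n + 1) * w) = 1 - q ^ (n + 1) * w := by ring
  rw [h1] at hlog
  have hinv : (1 - y)⁻¹ ≤ (1 - c)⁻¹ := by
    apply inv_anti₀ <;> linarith
  have hinv0 : 0 ≤ (1 - y)⁻¹ := inv_nonneg.mpr (by linarith)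
  have hinvc0 : 0 ≤ (1 - c)⁻¹ := inv_nonneg.mpr (by linarith)
  calc ‖Complex.log (1 - q ^ (n + 1) * w)‖ ≤ y ^ 2 * (1 - y)⁻¹ / 2 + y := hlog
    _ ≤ (y * c) * (1 - c)⁻¹ / 2 + ‖q‖ ^ n * c := by
        have : y ^ 2 ≤ y * c := by nlinarith
        have : y ^ 2 * (1 - y)⁻¹ ≤ (y * c) * (1 - c)⁻¹ := by
          apply mul_le_mul ‹y ^ 2 ≤ y * c› hinv hinv0 (by nlinarith)
        linarith
    _ ≤ (c * (1 - c)⁻¹ / 2 + 1) * c * ‖q‖ ^ n := by nlinarith [mul_le_mul_of_nonneg_right hyb (mul_nonneg hc0 hinvc0)]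

lemma aux_summable_log {q w : ℂ} {M : ℝ} (hM : 1 ≤ M) (hqM : ‖q‖ * M < 1)
    (hw : ‖w‖ ≤ M) : Summable (fun n : ℕ => Complex.log (1 - q ^ (n + 1) * w)) := by
  have hq1 : ‖q‖ < 1 := by nlinarith [norm_nonneg q]
  apply Summable.of_norm_bounded
    (g := fun n : ℕ => ((‖q‖ * M) * (1 - ‖q‖ * M)⁻¹ / 2 + 1) * (‖q‖ * M) * ‖q‖ ^ n)
  · simpa only [mul_assoc] using
      ((summable_geometric_of_lt_one (norm_nonneg q) hq1).mul_left
        (((‖q‖ * M) * (1 - ‖q‖ * M)⁻¹ / 2 + 1) * (‖q‖ * M)))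
  · exact fun n => aux_norm_log_le hM hqM hw n

lemma aux_hasProd {q w : ℂ} {M : ℝ} (hM : 1 ≤ M) (hqM : ‖q‖ * M < 1)
    (hw : ‖w‖ ≤ M) :
    HasProd (fun n : ℕ => 1 - q ^ (n + 1) * w) (Complex.exp (logSum q w)) := by
  have hs := aux_summable_log hM hqM hw
  have := hs.hasSum.cexp
  exact this.congr_fun fun n => (Complex.exp_log (aux_ne_zero hM hqM hw n)).symm

lemma aux_contOn (q : ℂ) (M : ℝ) (hM : 1 ≤ M) (hqM : ‖q‖ * M < 1) :
    ContinuousOn (logSum q) (Metric.closedBall (0 : ℂ) M) := by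
  have hq1 : ‖q‖ < 1 := by nlinarith [norm_nonneg q]
  have hcont : ∀ n : ℕ, ContinuousOn
      (fun w : ℂ => Complex.log (1 - q ^ (n + 1) * w)) (Metric.closedBall (0 : ℂ) M) := by
    intro n w hw
    rw [Metric.mem_closedBall, dist_zero_right] at hw
    have hc : ContinuousAt (fun w : ℂ => 1 - q ^ (n + 1) * w) w :=
      continuousAt_const.sub (continuousAt_const.mul continuousAt_id)
    exact (hc.clog (aux_slitPlane hM hqM hw n)).continuousWithinAt
  refine continuousOn_tsum (u := fun n : ℕ =>
    ((‖q‖ * M) * (1 - ‖q‖ * M)⁻¹ / 2 + 1) * (‖q‖ * M) * ‖q‖ ^ n) hcont ?_ ?_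
  · simpa only [mul_assoc] using
      ((summable_geometric_of_lt_one (norm_nonneg q) hq1).mul_left
        (((‖q‖ * M) * (1 - ‖q‖ * M)⁻¹ / 2 + 1) * (‖q‖ * M)))
  · intro n w hw
    rw [Metric.mem_closedBall, dist_zero_right] at hw
    exact aux_norm_log_le hM hqM hw n


/-- The theta-like function
`φ(τ, z) = (q_z − 1) · ∏_{n ≥ 1} (1 − qⁿ q_z)(1 − qⁿ q_z⁻¹)`,
where `q = e^{2πiτ}` and `q_z = e^{2πiz}`. -/
noncomputable def phi (τ z : ℂ) : ℂ :=
  (Complex.exp (2 * Real.pi * Complex.I * z) - 1) *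
    ∏' n : ℕ,
      ((1 - Complex.exp (2 * Real.pi * Complex.I * τ) ^ (n + 1) *
          Complex.exp (2 * Real.pi * Complex.I * z)) *
        (1 - Complex.exp (2 * Real.pi * Complex.I * τ) ^ (n + 1) *
          (Complex.exp (2 * Real.pi * Complex.I * z))⁻¹))

/-- For `τ` in the upper half plane, `φ(τ, z)/(e^{2πiz} − 1)` tends to
`∏_{n ≥ 1} (1 − qⁿ)²` as `z → 0`, `z ≠ 0`; so `φ(τ, ·)` has a simple zero at `z = 0`. -/
theorem phi_div_tendsto_eta_squared (τ : ℂ) (hτ : 0 < τ.im) :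
    Filter.Tendsto
      (fun z : ℂ => phi τ z / (Complex.exp (2 * Real.pi * Complex.I * z) - 1))
      (nhdsWithin 0 {(0 : ℂ)}ᶜ)
      (nhds (∏' n : ℕ, (1 - Complex.exp (2 * Real.pi * Complex.I * τ) ^ (n + 1)) ^ 2)) := by
  set q : ℂ := Complex.exp (2 * Real.pi * Complex.I * τ) with hqdef
  set e : ℂ → ℂ := fun z => Complex.exp (2 * Real.pi * Complex.I * z) with hedef
  have hq : ‖q‖ < 1 := by
    rw [hqdef, Complex.norm_exp]
    apply Real.exp_lt_one_iff.mpr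
    have : (2 * (Real.pi : ℂ) * Complex.I * τ).re = -(2 * Real.pi * τ.im) := by
      simp [Complex.mul_re, Complex.mul_im]
    rw [this]
    have := Real.pi_pos
    nlinarith
  -- choose r
  obtain ⟨r, hrc, hr0⟩ : ∃ r : ℝ, ‖q‖ * Real.exp (2 * Real.pi * r) < 1 ∧ 0 < r := by
    have hcont : Filter.Tendsto (fun r : ℝ => ‖q‖ * Real.exp (2 * Real.pi * r))
        (nhdsWithin 0 (Set.Ioi 0)) (nhds (‖q‖ * Real.exp (2 * Real.pi * 0))) := by
      apply Filter.Tendsto.mono_left _ nhdsWithin_le_nhds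
      exact (Continuous.tendsto (by continuity) 0)
    simp only [mul_zero, Real.exp_zero, mul_one] at hcont
    have h2 : ∀ᶠ r in nhdsWithin (0:ℝ) (Set.Ioi 0),
        ‖q‖ * Real.exp (2 * Real.pi * r) < 1 :=
      hcont.eventually (eventually_lt_nhds hq)
    exact (h2.and self_mem_nhdsWithin).exists
  set M : ℝ := Real.exp (2 * Real.pi * r) with hMdef
  have hM : 1 ≤ M := Real.one_le_exp (by positivity)
  -- norm bounds for e z and (e z)⁻¹ on the closed ball
  have hnorm : ∀ z : ℂ, ‖z‖ ≤ r → ‖e z‖ ≤ M ∧ ‖(e z)⁻¹‖ ≤ M := by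
    intro z hz
    have him : |z.im| ≤ r := le_trans (Complex.abs_im_le_norm z) hz
    have h1 : (2 * (Real.pi : ℂ) * Complex.I * z).re = -(2 * Real.pi * z.im) := by
      simp [Complex.mul_re, Complex.mul_im]
    constructor
    · rw [hedef]
      simp only [Complex.norm_exp, h1]
      apply Real.exp_le_exp.mpr
      have := abs_le.mp him
      nlinarith [Real.pi_pos]
    · rw [hedef]
      simp only [← Complex.exp_neg, Complex.norm_exp]
      have h2 : (-(2 * (Real.pi : ℂ) * Complex.I * z)).re = 2 * Real.pi * z.im := by
        simp [Complex.mul_re, Complex.mul_im]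
      rw [h2]
      apply Real.exp_le_exp.mpr
      have := abs_le.mp him
      nlinarith [Real.pi_pos]
  -- continuity of G
  set G : ℂ → ℂ := fun z =>
    Complex.exp (logSum q (e z)) * Complex.exp (logSum q ((e z)⁻¹)) with hGdef
  have hqM : ‖q‖ * M < 1 := hrc
  have hGcont : ContinuousAt G 0 := by
    have hball : Metric.closedBall (0:ℂ) r ∈ nhds (0:ℂ) := Metric.closedBall_mem_nhds 0 hr0
    have hce : Continuous e := by
      rw [hedef]; continuity
    have hcei : Continuous fun z => (e z)⁻¹ := by
      rw [hedef]
      simp only [← Complex.exp_neg]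
      continuity
    have hmt1 : Set.MapsTo e (Metric.closedBall (0:ℂ) r) (Metric.closedBall (0:ℂ) M) := by
      intro z hz
      rw [Metric.mem_closedBall, dist_zero_right] at hz ⊢
      exact (hnorm z hz).1
    have hmt2 : Set.MapsTo (fun z => (e z)⁻¹) (Metric.closedBall (0:ℂ) r)
        (Metric.closedBall (0:ℂ) M) := by
      intro z hz
      rw [Metric.mem_closedBall, dist_zero_right] at hz ⊢
      exact (hnorm z hz).2
    have h1 : ContinuousOn (fun z => logSum q (e z)) (Metric.closedBall (0:ℂ) r) :=
      (aux_contOn q M hM hqM).comp hce.continuousOn hmt1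
    have h2 : ContinuousOn (fun z => logSum q ((e z)⁻¹)) (Metric.closedBall (0:ℂ) r) :=
      (aux_contOn q M hM hqM).comp hcei.continuousOn hmt2
    have := ((Complex.continuous_exp.comp_continuousOn h1).mul
      (Complex.continuous_exp.comp_continuousOn h2)).continuousAt hball
    exact this
  -- value at 0
  have he0 : e 0 = 1 := by rw [hedef]; simp
  have hG0 : G 0 = ∏' n : ℕ, (1 - q ^ (n + 1)) ^ 2 := by
    have hw1 : ‖(1:ℂ)‖ ≤ M := by simpa using hM
    have hp1 := aux_hasProd hM hqM hw1
    have hp2 := (hp1.mul hp1).tprod_eq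
    rw [hGdef]
    simp only [he0, inv_one]
    rw [show (∏' n : ℕ, (1 - q ^ (n + 1)) ^ 2) =
        ∏' n : ℕ, ((1 - q ^ (n + 1) * 1) * (1 - q ^ (n + 1) * 1)) from
      tprod_congr fun n => by ring]
    exact hp2.symm
  -- eventual equality
  have hEq : ∀ᶠ z in nhdsWithin (0:ℂ) {(0:ℂ)}ᶜ,
      phi τ z / (e z - 1) = G z := by
    have hball : Metric.ball (0:ℂ) (min r 1) ∈ nhds (0:ℂ) :=
      Metric.ball_mem_nhds 0 (lt_min hr0 one_pos)
    filter_upwards [mem_nhdsWithin_of_mem_nhds hball, self_mem_nhdsWithin] with z hz hz0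
    rw [Metric.mem_ball, dist_zero_right] at hz
    have hzr : ‖z‖ ≤ r := le_of_lt (lt_of_lt_of_le hz (min_le_left _ _))
    have hz1 : ‖z‖ < 1 := lt_of_lt_of_le hz (min_le_right _ _)
    have hz0' : z ≠ 0 := hz0
    have he1 : e z ≠ 1 := by
      intro h
      rw [hedef] at h
      obtain ⟨n, hn⟩ := Complex.exp_eq_one_iff.mp h
      have h2pi : (2 * (Real.pi : ℂ) * Complex.I) ≠ 0 := by
        simp [Complex.I_ne_zero, Real.pi_ne_zero]
      have hzn : z = (n : ℂ) := by
        have : (2 * (Real.pi : ℂ) * Complex.I) * z =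
            (2 * (Real.pi : ℂ) * Complex.I) * (n : ℂ) := by
          rw [hn]; ring
        exact mul_left_cancel₀ h2pi this
      have hn0 : n ≠ 0 := by
        intro h0
        apply hz0'
        rw [hzn, h0]; simp
      have : (1 : ℝ) ≤ ‖z‖ := by
        rw [hzn]
        rw [Complex.norm_intCast]
        exact_mod_cast Int.one_le_abs hn0
      linarith
    have hesub : e z - 1 ≠ 0 := sub_ne_zero.mpr he1
    have hpA := aux_hasProd hM hqM (hnorm z hzr).1
    have hpB := aux_hasProd hM hqM (hnorm z hzr).2
    have hprod := (hpA.mul hpB).tprod_eq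
    rw [show phi τ z = (e z - 1) *
        ∏' n : ℕ, ((1 - q ^ (n + 1) * e z) * (1 - q ^ (n + 1) * (e z)⁻¹)) from rfl]
    rw [hprod, hGdef]
    field_simp
  -- conclude
  rw [show (∏' n : ℕ, (1 - q ^ (n + 1)) ^ 2) = G 0 from hG0.symm]
  exact Filter.Tendsto.congr' (hEq.mono fun z h => h.symm)
    ((hGcont.tendsto).mono_left nhdsWithin_le_nhds)
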